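/- The state-independent disturbance satisfies η(𝒜',ℬ) ≤ 1 − 1/d. -/

import Mathlib

open scoped ComplexInnerProductSpace

noncomputable section

variable {H : Type*} [NormedAddCommGroup H] [InnerProductSpace ℂ H] [FiniteDimensional ℂ H]
variable {ι ι' : Type*} [Fintype ι] [Fintype ι']

/-- The rank-one projector `|v⟩⟨v|`. -/
def ketbra (v : H) : H →ₗ[ℂ] H where
  toFun x := ⟪v, x⟫ • v
  map_add' x y := by simp [inner_add_right, add_smul]
  map_smul' c x := by simp [inner_smul_right, mul_smul]

/-- A density operator: self-adjoint, positive semidefinite, trace one. -/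
def IsDensity (ρ : H →ₗ[ℂ] H) : Prop :=
  LinearMap.IsSymmetric ρ ∧ (∀ x : H, 0 ≤ (⟪x, ρ x⟫).re) ∧
    LinearMap.trace ℂ H ρ = 1

/-- The state-dependent error `ε_ρ(𝒜,𝒜')`. -/
def sdError (a a' : ι → H) (ρ : H →ₗ[ℂ] H) : ℝ :=
  ⨆ i : ι, ‖LinearMap.trace ℂ H (ρ ∘ₗ (ketbra (a i) - ketbra (a' i)))‖

/-- The state-independent error `ε(𝒜,𝒜')`. -/
def siError (a a' : ι → H) : ℝ :=
  ⨆ ρ : {ρ : H →ₗ[ℂ] H // IsDensity ρ}, sdError a a' ρ.1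

/-- The operator `|b_i⟩⟨b_i| − Σ_j |⟨a'_j, b_i⟩|² |a'_j⟩⟨a'_j|`. -/
def distOp (a' : ι' → H) (b : ι → H) (i : ι) : H →ₗ[ℂ] H :=
  ketbra (b i) - ∑ j : ι', (‖⟪a' j, b i⟫‖ ^ 2 : ℂ) • ketbra (a' j)

/-- The state-dependent disturbance `η_ρ(𝒜',ℬ)`. -/
def sdDist (a' : ι' → H) (b : ι → H) (ρ : H →ₗ[ℂ] H) : ℝ :=
  ⨆ i : ι, ‖LinearMap.trace ℂ H (ρ ∘ₗ distOp a' b i)‖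

/-- The state-independent disturbance `η(𝒜',ℬ)`. -/
def siDist (a' : ι' → H) (b : ι → H) : ℝ :=
  ⨆ ρ : {ρ : H →ₗ[ℂ] H // IsDensity ρ}, sdDist a' b ρ.1

/-- The state-independent overall error `Δ(𝒜,𝒜',ℬ)`. -/
def siOverall (a a' b : ι → H) : ℝ :=
  ⨆ ρ : {ρ : H →ₗ[ℂ] H // IsDensity ρ}, (sdError a a' ρ.1 + sdDist a' b ρ.1)

set_option linter.unusedSectionVars false

lemma trace_onb {ι : Type*} [Fintype ι] (v : OrthonormalBasis ι ℂ H) (f : H →ₗ[ℂ] H) :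
    LinearMap.trace ℂ H f = ∑ i, ⟪v i, f (v i)⟫ := by
  classical
  rw [LinearMap.trace_eq_matrix_trace ℂ v.toBasis, Matrix.trace]
  simp [Matrix.diag, LinearMap.toMatrix_apply, OrthonormalBasis.coe_toBasis,
    OrthonormalBasis.coe_toBasis_repr_apply, OrthonormalBasis.repr_apply_apply]

lemma trace_comp_ketbra (ρ : H →ₗ[ℂ] H) (v : H) :
    LinearMap.trace ℂ H (ρ ∘ₗ ketbra v) = ⟪v, ρ v⟫ := by
  let e := stdOrthonormalBasis ℂ H
  rw [trace_onb e]
  have h : ∀ i, ⟪e i, (ρ ∘ₗ ketbra v) (e i)⟫ = ⟪v, e i⟫ * ⟪e i, ρ v⟫ := by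
    intro i
    simp [ketbra, LinearMap.comp_apply, inner_smul_right, map_smul, mul_comm]
  rw [Finset.sum_congr rfl fun i _ => h i]
  exact e.sum_inner_mul_inner v (ρ v)

lemma cs_psd (ρ : H →ₗ[ℂ] H) (hsym : LinearMap.IsSymmetric ρ)
    (hpos : ∀ x : H, 0 ≤ (⟪x, ρ x⟫).re) (x y : H) :
    ‖⟪x, ρ y⟫‖ ^ 2 ≤ (⟪x, ρ x⟫).re * (⟪y, ρ y⟫).re := by
  let c : PreInnerProductSpace.Core ℂ H :=
  { inner := fun u w => ⟪u, ρ w⟫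
    conj_inner_symm := fun u w => by
      simpa [inner_conj_symm] using (congrArg (starRingEnd ℂ) (hsym w u)).symm
    re_inner_nonneg := hpos
    add_left := fun u w z => by simp [inner_add_left]
    smul_left := fun u w r => by simp [inner_smul_left]; ring }
  have h := @InnerProductSpace.Core.inner_mul_inner_self_le ℂ H _ _ _ c x y
  have hxy : ‖⟪y, ρ x⟫‖ = ‖⟪x, ρ y⟫‖ := by
    rw [← hsym x y, ← inner_conj_symm, RCLike.norm_conj]  -- sym: ⟪ρ x, y⟫ = ⟪x, ρ y⟫; ⟪y, ρ x⟫ = conj ⟪ρ x, y⟫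
  calc ‖⟪x, ρ y⟫‖ ^ 2 = ‖⟪x, ρ y⟫‖ * ‖⟪y, ρ x⟫‖ := by rw [hxy, sq]
    _ ≤ (⟪x, ρ x⟫).re * (⟪y, ρ y⟫).re := h

lemma conj_mul_self (z : ℂ) : (starRingEnd ℂ) z * z = (‖z‖ : ℂ) ^ 2 := by
  rw [mul_comm, Complex.mul_conj, Complex.normSq_eq_norm_sq, Complex.ofReal_pow]

lemma key {d : ℕ} (hd : 2 ≤ d) (a' b : OrthonormalBasis (Fin d) ℂ H)
    (ρ : H →ₗ[ℂ] H) (hρ : IsDensity ρ) (i : Fin d) :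
    ‖LinearMap.trace ℂ H (ρ ∘ₗ distOp ⇑a' ⇑b i)‖ ≤ 1 - 1 / (d : ℝ) := by
  classical
  obtain ⟨hsym, hpos, htr⟩ := hρ
  have hd2 : (2:ℝ) ≤ (d:ℝ) := by exact_mod_cast hd
  have hd0 : (0:ℝ) < d := by linarith
  set q : Fin d → ℝ := fun j => (⟪a' j, ρ (a' j)⟫).re with hqdef
  set w : Fin d → ℝ := fun j => ‖⟪a' j, (b i : H)⟫‖ * Real.sqrt (q j) with hwdef
  set W : ℝ := ∑ j, w j with hWdef
  -- trace formula
  have htrace : LinearMap.trace ℂ H (ρ ∘ₗ distOp ⇑a' ⇑b i)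
      = ⟪(b i : H), ρ (b i)⟫
        - ∑ j, (‖⟪a' j, (b i : H)⟫‖ ^ 2 : ℂ) * ⟪a' j, ρ (a' j)⟫ := by
    have hcomp : ρ ∘ₗ distOp ⇑a' ⇑b i
        = ρ ∘ₗ ketbra (b i) - ∑ j, (‖⟪a' j, (b i : H)⟫‖ ^ 2 : ℂ) • (ρ ∘ₗ ketbra (a' j)) := by
      unfold distOp
      ext x
      simp [LinearMap.comp_apply, LinearMap.sub_apply, LinearMap.sum_apply,
        LinearMap.smul_apply, map_sum, map_smul]
    rw [hcomp, map_sub, map_sum]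
    simp only [map_smul, smul_eq_mul, trace_comp_ketbra]
  -- expansion of ⟪b i, ρ (b i)⟫
  set term : Fin d → Fin d → ℂ :=
    fun j k => (starRingEnd ℂ) ⟪a' j, (b i : H)⟫ * (⟪a' k, (b i : H)⟫ * ⟪a' j, ρ (a' k)⟫)
    with htermdef
  have hb : (b i : H) = ∑ k, ⟪a' k, (b i : H)⟫ • a' k := (a'.sum_repr' (b i)).symm
  have hexp : ⟪(b i : H), ρ (b i)⟫ = ∑ j, ∑ k, term j k := by
    conv_lhs => rw [hb]
    rw [map_sum, sum_inner]
    refine Finset.sum_congr rfl fun j _ => ?_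
    rw [inner_smul_left, inner_sum, Finset.mul_sum]
    refine Finset.sum_congr rfl fun k _ => ?_
    simp only [htermdef, map_smul, inner_smul_right]
  have hdiag : ∀ j, (‖⟪a' j, (b i : H)⟫‖ ^ 2 : ℂ) * ⟪a' j, ρ (a' j)⟫ = term j j := by
    intro j
    rw [htermdef, ← conj_mul_self]
    ring
  have hT : LinearMap.trace ℂ H (ρ ∘ₗ distOp ⇑a' ⇑b i)
      = ∑ j, ((∑ k, term j k) - term j j) := by
    rw [htrace, hexp, Finset.sum_sub_distrib]
    congr 1
    exact Finset.sum_congr rfl fun j _ => hdiag j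
  -- Cauchy-Schwarz for matrix entries
  have hq0 : ∀ j, 0 ≤ q j := fun j => hpos (a' j)
  have hcs : ∀ j k, ‖⟪a' j, ρ (a' k)⟫‖ ≤ Real.sqrt (q j) * Real.sqrt (q k) := by
    intro j k
    have h1 := cs_psd ρ hsym hpos (a' j) (a' k)
    have h2 : ‖⟪a' j, ρ (a' k)⟫‖ = Real.sqrt (‖⟪a' j, ρ (a' k)⟫‖ ^ 2) :=
      (Real.sqrt_sq (norm_nonneg _)).symm
    rw [h2, ← Real.sqrt_mul (hq0 j)]
    exact Real.sqrt_le_sqrt h1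
  have hterm_le : ∀ j k, ‖term j k‖ ≤ w j * w k := by
    intro j k
    rw [htermdef]
    simp only [norm_mul, RCLike.norm_conj]
    calc ‖⟪a' j, (b i : H)⟫‖ * (‖⟪a' k, (b i : H)⟫‖ * ‖⟪a' j, ρ (a' k)⟫‖)
        ≤ ‖⟪a' j, (b i : H)⟫‖ * (‖⟪a' k, (b i : H)⟫‖ * (Real.sqrt (q j) * Real.sqrt (q k))) := by
          gcongr
          · exact hcs j k
      _ = w j * w k := by rw [hwdef]; ring
  -- norm bound
  have hnorm : ‖LinearMap.trace ℂ H (ρ ∘ₗ distOp ⇑a' ⇑b i)‖ ≤ W * W - ∑ j, w j ^ 2 := by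
    rw [hT]
    calc ‖∑ j, ((∑ k, term j k) - term j j)‖
        ≤ ∑ j, ‖(∑ k, term j k) - term j j‖ := norm_sum_le _ _
      _ = ∑ j, ‖∑ k ∈ Finset.univ.erase j, term j k‖ := by
          refine Finset.sum_congr rfl fun j _ => ?_
          congr 1
          rw [Finset.sum_erase_eq_sub (Finset.mem_univ j)]
      _ ≤ ∑ j, ∑ k ∈ Finset.univ.erase j, ‖term j k‖ :=
          Finset.sum_le_sum fun j _ => norm_sum_le _ _
      _ ≤ ∑ j, ∑ k ∈ Finset.univ.erase j, w j * w k :=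
          Finset.sum_le_sum fun j _ => Finset.sum_le_sum fun k _ => hterm_le j k
      _ = ∑ j, w j * (W - w j) := by
          refine Finset.sum_congr rfl fun j _ => ?_
          rw [← Finset.mul_sum, Finset.sum_erase_eq_sub (Finset.mem_univ j), hWdef]
      _ = W * W - ∑ j, w j ^ 2 := by
          simp only [mul_sub, Finset.sum_sub_distrib, ← Finset.sum_mul, sq]
          rw [← hWdef]
  -- Parseval
  have hs2 : ∑ j, ‖⟪a' j, (b i : H)⟫‖ ^ 2 = 1 := by
    have h1 := a'.sum_inner_mul_inner (b i) (b i)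
    have h3 : ⟪(b i : H), (b i : H)⟫ = 1 := by
      rw [inner_self_eq_norm_sq_to_K, b.orthonormal.1 i]
      norm_num
    have h2 : ((∑ j, ‖⟪a' j, (b i : H)⟫‖ ^ 2 : ℝ) : ℂ) = 1 := by
      rw [← h3, ← h1]
      push_cast
      refine Finset.sum_congr rfl fun j _ => ?_
      rw [← inner_conj_symm (b i) (a' j), conj_mul_self]
    exact_mod_cast h2
  have hq1 : ∑ j, q j = 1 := by
    have h1 : LinearMap.trace ℂ H ρ = ∑ j, ⟪a' j, ρ (a' j)⟫ := trace_onb a' ρ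
    rw [htr] at h1
    have h4 := congrArg Complex.re h1.symm
    simpa [hqdef] using h4
  have hW2 : W ^ 2 ≤ 1 := by
    have hcs2 := Finset.sum_mul_sq_le_sq_mul_sq Finset.univ
      (fun j => ‖⟪a' j, (b i : H)⟫‖) (fun j => Real.sqrt (q j))
    simp only [Real.sq_sqrt (hq0 _)] at hcs2
    rw [hs2, hq1, one_mul] at hcs2
    exact hcs2
  have hch : W ^ 2 ≤ (d : ℝ) * ∑ j, w j ^ 2 := by
    have h := sq_sum_le_card_mul_sum_sq (s := (Finset.univ : Finset (Fin d))) (f := w)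
    simpa [hWdef] using h
  refine hnorm.trans ?_
  rw [show (1:ℝ) - 1 / (d:ℝ) = ((d:ℝ) - 1) / (d:ℝ) by field_simp]
  rw [le_div_iff₀ hd0]
  nlinarith [hW2, hch, mul_nonneg (sub_nonneg.2 hW2) (by linarith : (0:ℝ) ≤ (d:ℝ) - 1)]

/-- `η(𝒜',ℬ) ≤ 1 - 1/d`. -/
theorem state_independent_disturbance_le {d : ℕ} (hd : 2 ≤ d)
    (a' b : OrthonormalBasis (Fin d) ℂ H) :
    siDist (⇑a') (⇑b) ≤ 1 - 1 / (d : ℝ) := by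
  have hd2 : (2:ℝ) ≤ (d:ℝ) := by exact_mod_cast hd
  have hb0 : (0:ℝ) ≤ 1 - 1 / (d : ℝ) := by
    have h1 : 1 / (d:ℝ) ≤ 1 / 2 := by
      apply one_div_le_one_div_of_le <;> linarith
    linarith
  unfold siDist
  refine Real.iSup_le (fun ρ => ?_) hb0
  unfold sdDist
  exact Real.iSup_le (fun i => key hd a' b ρ.1 ρ.2 i) hb0
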